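/- Let I be the ideal of k[x_1,...,x_n] generated by the set A = {x_1^{d_1} - x_2 x_n^{d_1-1}, x_2^{d_2} - x_3 x_n^{d_2-1}, ..., x_{n-2}^{d_{n-2}} - x_{n-1} x_n^{d_{n-2}-1}, x_{n-1}^{d_{n-1}}}. Then A is a Gröbner basis of I with respect to the degree reverse lexicographic order with x_n ≺ ··· ≺ x_1, and the leading ideal of I is ⟨x_1^{d_1}, ..., x_{n-1}^{d_{n-1}}⟩. -/

import Mathlib

open MvPolynomial

/-- Strict degree reverse lexicographic order (with `x_n` the smallest variable, i.e.
the variable of highest index smallest): `α ≺ β` iff `deg α < deg β`, or the total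
degrees agree and at the largest index where they differ, `α` has the larger entry. -/
def DegRevLexLT {n : ℕ} (α β : Fin n →₀ ℕ) : Prop :=
  (α.sum fun _ v => v) < (β.sum fun _ v => v) ∨
    ((α.sum fun _ v => v) = (β.sum fun _ v => v) ∧
      ∃ i : Fin n, β i < α i ∧ ∀ j : Fin n, i < j → α j = β j)

/-- `e` is the exponent of the leading term of `f` w.r.t. degrevlex. -/
def IsLeadExp {n : ℕ} {k : Type*} [CommRing k] (f : MvPolynomial (Fin n) k)
    (e : Fin n →₀ ℕ) : Prop :=
  e ∈ f.support ∧ ∀ e' ∈ f.support, e' ≠ e → DegRevLexLT e' e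

/-- The leading term ideal of `I` w.r.t. degrevlex: the ideal generated by the leading
monomials of the nonzero elements of `I`. -/
noncomputable def ltIdeal {n : ℕ} {k : Type*} [Field k] (I : Ideal (MvPolynomial (Fin n) k)) :
    Ideal (MvPolynomial (Fin n) k) :=
  Ideal.span {m | ∃ f ∈ I, f ≠ 0 ∧ ∃ e, IsLeadExp f e ∧ m = monomial e (1 : k)}

/-- `A` is a Gröbner basis of `I` w.r.t. degrevlex: `A ⊆ I` and the leading terms of the
elements of `A` generate the leading term ideal of `I`. -/
def IsGroebnerBasis {n : ℕ} {k : Type*} [Field k] (A : Set (MvPolynomial (Fin n) k))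
    (I : Ideal (MvPolynomial (Fin n) k)) : Prop :=
  A ⊆ (I : Set (MvPolynomial (Fin n) k)) ∧
    ltIdeal I = Ideal.span {m | ∃ f ∈ A, ∃ e, IsLeadExp f e ∧ m = monomial e (1 : k)}


namespace MLG

variable {n : ℕ}

def deg (α : Fin n →₀ ℕ) : ℕ := α.sum fun _ v => v

lemma deg_eq (α : Fin n →₀ ℕ) : deg α = ∑ x : Fin n, α x :=
  Finsupp.sum_fintype _ _ (fun _ => rfl)

lemma apply_le_deg (α : Fin n →₀ ℕ) (i : Fin n) : α i ≤ deg α := by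
  rw [deg_eq]
  exact Finset.single_le_sum (fun x _ => Nat.zero_le _) (Finset.mem_univ i)

/-- geometric sum bound -/
lemma gsum (D : ℕ) : ∀ m : ℕ, D * (∑ j ∈ Finset.range m, (D+1)^j) + 1 = (D+1)^m := by
  intro m
  induction m with
  | zero => simp
  | succ m ih =>
    rw [Finset.sum_range_succ, Nat.mul_add, pow_succ]
    nlinarith [ih]

lemma digit_lt {D : ℕ} (a b : ℕ → ℕ) (m i : ℕ) (him : i < m)
    (ha : ∀ j, j < m → a j ≤ D) (hab : a i < b i) (hhigh : ∀ j, i < j → a j = b j) :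
    ∑ j ∈ Finset.range m, a j * (D+1)^j < ∑ j ∈ Finset.range m, b j * (D+1)^j := by
  have hsplit : ∀ c : ℕ → ℕ, ∑ j ∈ Finset.range m, c j * (D+1)^j
      = (∑ j ∈ Finset.range i, c j * (D+1)^j) + c i * (D+1)^i
        + ∑ j ∈ Finset.Ico (i+1) m, c j * (D+1)^j := by
    intro c
    rw [← Finset.sum_range_succ, Finset.range_eq_Ico, Finset.range_eq_Ico]
    exact (Finset.sum_Ico_consecutive (fun j => c j * (D+1)^j) (Nat.zero_le _) him).symm
  rw [hsplit a, hsplit b]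
  have h1 : ∑ j ∈ Finset.Ico (i+1) m, a j * (D+1)^j = ∑ j ∈ Finset.Ico (i+1) m, b j * (D+1)^j :=
    Finset.sum_congr rfl (fun j hj => by rw [hhigh j (Finset.mem_Ico.mp hj).1])
  rw [h1]
  have h2 : ∑ j ∈ Finset.range i, a j * (D+1)^j ≤ D * ∑ j ∈ Finset.range i, (D+1)^j := by
    rw [Finset.mul_sum]
    exact Finset.sum_le_sum (fun j hj => Nat.mul_le_mul_right _
      (ha j (lt_trans (Finset.mem_range.mp hj) him)))
  have h3 : (a i + 1) * (D+1)^i ≤ b i * (D+1)^i := Nat.mul_le_mul_right _ hab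
  have h4 := gsum D i
  have h3' : a i * (D+1)^i + (D+1)^i ≤ b i * (D+1)^i := by nlinarith [h3]
  have h0 : 0 ≤ ∑ j ∈ Finset.range i, b j * (D+1)^j := Nat.zero_le _
  linarith [h2, h4, h3', h0]

def avec (α : Fin n →₀ ℕ) (j : ℕ) : ℕ := if h : j < n then α ⟨j, h⟩ else 0

def wt (α : Fin n →₀ ℕ) : ℕ :=
  ∑ j ∈ Finset.range n, (deg α - avec α j) * (deg α + 1)^j

def μ (α : Fin n →₀ ℕ) : ℕ × ℕ := (deg α, wt α)

lemma mono {α β : Fin n →₀ ℕ} (h : DegRevLexLT α β) :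
    Prod.Lex (· < ·) (· < ·) (μ α) (μ β) := by
  rcases h with h | ⟨hdeg, i, hi, hhigh⟩
  · exact Prod.Lex.left _ _ h
  · have hdeg' : deg α = deg β := hdeg
    rw [μ, μ, hdeg']
    apply Prod.Lex.right
    rw [wt, wt, hdeg']
    apply digit_lt _ _ n i.val i.isLt
    · intro j _; exact Nat.sub_le _ _
    · have h1 : α i ≤ deg β := hdeg' ▸ apply_le_deg α i
      have h2 : avec α i.val = α i := by rw [avec, dif_pos i.isLt]
      have h3 : avec β i.val = β i := by rw [avec, dif_pos i.isLt]
      omega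
    · intro j hj
      rw [avec, avec]
      split
      · next hjn => exact congrArg _ (hhigh ⟨j, hjn⟩ hj)
      · rfl

lemma trichot {α β : Fin n →₀ ℕ} (h : α ≠ β) :
    DegRevLexLT α β ∨ DegRevLexLT β α := by
  rcases Nat.lt_trichotomy (deg α) (deg β) with hd | hd | hd
  · exact Or.inl (Or.inl hd)
  · have hne : ∃ j : Fin n, α j ≠ β j := by
      by_contra hc
      push_neg at hc
      exact h (Finsupp.ext hc)
    set s : Finset (Fin n) := Finset.univ.filter (fun j => α j ≠ β j) with hs
    have hsne : s.Nonempty := by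
      obtain ⟨j, hj⟩ := hne
      exact ⟨j, by simp [hs, hj]⟩
    set i := s.max' hsne with hi
    have himem : α i ≠ β i := by
      have := s.max'_mem hsne
      simpa [hs] using this
    have hhigh : ∀ j : Fin n, i < j → α j = β j := by
      intro j hj
      by_contra hc
      have : j ∈ s := by simp [hs, hc]
      exact absurd (s.le_max' j this) (not_le.mpr hj)
    rcases Nat.lt_or_ge (α i) (β i) with hlt | hge
    · exact Or.inr (Or.inr ⟨hd.symm, i, hlt, fun j hj => (hhigh j hj).symm⟩)
    · exact Or.inl (Or.inr ⟨hd, i, lt_of_le_of_ne hge (Ne.symm himem), hhigh⟩)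
  · exact Or.inr (Or.inl hd)

lemma mono' {α β : Fin n →₀ ℕ} (h : DegRevLexLT α β) :
    deg α < deg β ∨ (deg α = deg β ∧ wt α < wt β) := by
  have := mono h
  rw [Prod.lex_def] at this
  exact this

lemma irrefl' (α : Fin n →₀ ℕ) : ¬ DegRevLexLT α α := by
  intro h
  rcases mono' h with h | h <;> omega

lemma asymm' {α β : Fin n →₀ ℕ} (h : DegRevLexLT α β) : ¬ DegRevLexLT β α := by
  intro h'
  rcases mono' h with h1 | h1 <;> rcases mono' h' with h2 | h2 <;> omega

lemma trans' {α β γ : Fin n →₀ ℕ} (h1 : DegRevLexLT α β) (h2 : DegRevLexLT β γ) :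
    DegRevLexLT α γ := by
  have hne : α ≠ γ := by
    rintro rfl
    exact asymm' h1 h2
  rcases trichot hne with h | h
  · exact h
  · rcases mono' h1 with a1 | a1 <;> rcases mono' h2 with a2 | a2 <;>
      rcases mono' h with a3 | a3 <;> omega

lemma wf : WellFounded (@DegRevLexLT n) := by
  have hw : WellFounded (Prod.Lex ((· < ·) : ℕ → ℕ → Prop) ((· < ·) : ℕ → ℕ → Prop)) := by
    have : WellFoundedLT (ℕ ×ₗ ℕ) := inferInstance
    exact this.wf
  exact Subrelation.wf (fun {a b} h => mono h) (InvImage.wf μ hw)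



variable (n) (d : ℕ → ℕ)

def S (α : Fin n →₀ ℕ) : Finset (Fin n) :=
  Finset.univ.filter fun j => (j : ℕ) < n - 1 ∧ d j.val ≤ α j

lemma mem_S {α : Fin n →₀ ℕ} {j : Fin n} :
    j ∈ S n d α ↔ (j : ℕ) < n - 1 ∧ d j.val ≤ α j := by simp [S]

noncomputable def stepv (i : ℕ) (hn : 3 ≤ n) (hi : i < n - 2) (β : Fin n →₀ ℕ) : Fin n →₀ ℕ :=
  β - Finsupp.single (⟨i, by omega⟩ : Fin n) (d i)
    + Finsupp.single (⟨i + 1, by omega⟩ : Fin n) 1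
    + Finsupp.single (⟨n - 1, by omega⟩ : Fin n) (d i - 1)

lemma stepv_apply (i : ℕ) (hn : 3 ≤ n) (hi : i < n - 2) (β : Fin n →₀ ℕ) (x : Fin n) :
    stepv n d i hn hi β x =
      β x - (if (x : ℕ) = i then d i else 0) + (if (x : ℕ) = i + 1 then 1 else 0)
        + (if (x : ℕ) = n - 1 then d i - 1 else 0) := by
  simp only [stepv, Finsupp.add_apply, Finsupp.tsub_apply, Finsupp.single_apply,
    Fin.ext_iff, eq_comm]

lemma deg_single (j : Fin n) (v : ℕ) : deg (Finsupp.single j v) = v :=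
  Finsupp.sum_single_index rfl

lemma deg_add (a b : Fin n →₀ ℕ) : deg (a + b) = deg a + deg b :=
  Finsupp.sum_add_index' (fun _ => rfl) (fun _ _ _ => rfl)

lemma deg_stepv (i : ℕ) (hn : 3 ≤ n) (hi : i < n - 2) (β : Fin n →₀ ℕ)
    (hβ : d i ≤ β ⟨i, by omega⟩) (hd1 : 1 ≤ d i) :
    deg (stepv n d i hn hi β) = deg β := by
  have hle : Finsupp.single (⟨i, by omega⟩ : Fin n) (d i) ≤ β :=
    Finsupp.single_le_iff.mpr hβ
  have hcan : β - Finsupp.single (⟨i, by omega⟩ : Fin n) (d i)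
      + Finsupp.single (⟨i, by omega⟩ : Fin n) (d i) = β := tsub_add_cancel_of_le hle
  have h1 : deg (β - Finsupp.single (⟨i, by omega⟩ : Fin n) (d i)) + d i = deg β := by
    conv_rhs => rw [← hcan]
    rw [deg_add, deg_single]
  have hdi : d i ≤ deg β := le_trans hβ (apply_le_deg β _)
  rw [stepv, deg_add, deg_add, deg_single, deg_single]
  omega

lemma step_lt (i : ℕ) (hn : 3 ≤ n) (hi : i < n - 2) (β : Fin n →₀ ℕ)
    (hβ : d i ≤ β ⟨i, by omega⟩) (hd1 : 1 ≤ d i) :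
    DegRevLexLT (stepv n d i hn hi β) β := by
  right
  refine ⟨deg_stepv n d i hn hi β hβ hd1, ?_⟩
  rcases Nat.lt_or_ge (d i) 2 with h2 | h2
  · -- d i = 1, witness i+1
    refine ⟨⟨i + 1, by omega⟩, ?_, ?_⟩
    · rw [stepv_apply]
      simp only [show ¬ (i + 1 = i) by omega, show (i + 1 = i + 1) from rfl,
        show ¬ (i + 1 = n - 1) by omega, if_true, if_false]
      omega
    · intro j hj
      rw [stepv_apply]
      have hj' : i + 1 < (j : ℕ) := hj
      have : ¬ ((j : ℕ) = i) := by omega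
      have : ¬ ((j : ℕ) = i + 1) := by omega
      split_ifs <;> omega
  · -- d i ≥ 2, witness n-1
    refine ⟨⟨n - 1, by omega⟩, ?_, ?_⟩
    · rw [stepv_apply]
      simp only [Fin.val_mk]
      rw [if_neg (by omega), if_neg (by omega)]
      simp only [if_true]
      omega
    · intro j hj
      have hj' : n - 1 < (j : ℕ) := hj
      have := j.isLt
      omega

universe u

variable {k : Type u} [Field k]

noncomputable def NF (hn : 3 ≤ n) (hd : ∀ i, i < n - 1 → 1 ≤ d i) (α : Fin n →₀ ℕ) :
    MvPolynomial (Fin n) k :=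
  if h : (S n d α).Nonempty then
    if hv : (((S n d α).min' h) : ℕ) < n - 2 then
      NF hn hd (stepv n d ((S n d α).min' h).val hn hv α)
    else 0
  else monomial α 1
termination_by μ α
decreasing_by
  · have hmem := (S n d α).min'_mem h
    rw [mem_S] at hmem
    exact mono (step_lt n d _ hn hv α hmem.2 (hd _ hmem.1))

variable {n}

lemma NF_of_empty (hn : 3 ≤ n) (hd : ∀ i, i < n - 1 → 1 ≤ d i) {α : Fin n →₀ ℕ}
    (h : ¬ (S n d α).Nonempty) : (NF n d hn hd α : MvPolynomial (Fin n) k) = monomial α 1 := by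
  rw [NF, dif_neg h]

lemma NF_support (hn : 3 ≤ n) (hd : ∀ i, i < n - 1 → 1 ≤ d i) (α : Fin n →₀ ℕ) :
    ∀ β ∈ (NF n d hn hd α : MvPolynomial (Fin n) k).support, β = α ∨ DegRevLexLT β α := by
  refine wf.induction
    (C := fun α => ∀ β ∈ (NF n d hn hd α : MvPolynomial (Fin n) k).support,
      β = α ∨ DegRevLexLT β α) α ?_
  intro α ih β hβ
  rw [NF] at hβ
  by_cases h : (S n d α).Nonempty
  · rw [dif_pos h] at hβ
    by_cases hv : (((S n d α).min' h : Fin n) : ℕ) < n - 2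
    · rw [dif_pos hv] at hβ
      have hmem := (S n d α).min'_mem h
      rw [mem_S] at hmem
      have hlt := step_lt n d _ hn hv α hmem.2 (hd _ hmem.1)
      rcases ih _ hlt β hβ with rfl | h'
      · exact Or.inr hlt
      · exact Or.inr (trans' h' hlt)
    · rw [dif_neg hv] at hβ
      simp at hβ
  · rw [dif_neg h] at hβ
    simp [MvPolynomial.support_monomial] at hβ
    exact Or.inl hβ.symm

lemma mem_S_stepv (hn : 3 ≤ n) {α : Fin n →₀ ℕ} {j : Fin n} (hj : j ∈ S n d α)
    (i0 : ℕ) (hi0 : i0 < n - 2) (hne : (j : ℕ) ≠ i0) :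
    j ∈ S n d (stepv n d i0 hn hi0 α) := by
  rw [mem_S] at hj ⊢
  refine ⟨hj.1, ?_⟩
  rw [stepv_apply]
  have h1 := hj.1
  have h2 := hj.2
  split_ifs <;> omega

lemma stepv_comm (hn : 3 ≤ n) (i j : ℕ) (hi : i < n - 2) (hj : j < n - 2) (hij : i ≠ j)
    (β : Fin n →₀ ℕ) (hβi : d i ≤ β ⟨i, by omega⟩) (hβj : d j ≤ β ⟨j, by omega⟩) :
    stepv n d i hn hi (stepv n d j hn hj β) = stepv n d j hn hj (stepv n d i hn hi β) := by
  ext x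
  rw [stepv_apply, stepv_apply, stepv_apply, stepv_apply]
  have hβi' : (x : ℕ) = i → d i ≤ β x := fun hh => by
    rw [show x = (⟨i, by omega⟩ : Fin n) from Fin.ext hh]; exact hβi
  have hβj' : (x : ℕ) = j → d j ≤ β x := fun hh => by
    rw [show x = (⟨j, by omega⟩ : Fin n) from Fin.ext hh]; exact hβj
  rcases eq_or_ne (x : ℕ) i with hxi | hxi <;> rcases eq_or_ne (x : ℕ) j with hxj | hxj
  · omega
  · have := hβi' hxi
    split_ifs <;> omega
  · have := hβj' hxj
    split_ifs <;> omega
  · split_ifs <;> omega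

lemma NF_inv (hn : 3 ≤ n) (hd : ∀ i, i < n - 1 → 1 ≤ d i) (α : Fin n →₀ ℕ) :
    ∀ i ∈ S n d α,
      (∀ hv : (i : ℕ) < n - 2,
        (NF n d hn hd (stepv n d (i : ℕ) hn hv α) : MvPolynomial (Fin n) k) = NF n d hn hd α)
      ∧ (¬ ((i : ℕ) < n - 2) → (NF n d hn hd α : MvPolynomial (Fin n) k) = 0) := by
  refine wf.induction (C := fun α => ∀ i ∈ S n d α,
      (∀ hv : (i : ℕ) < n - 2,
        (NF n d hn hd (stepv n d (i : ℕ) hn hv α) : MvPolynomial (Fin n) k) = NF n d hn hd α)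
      ∧ (¬ ((i : ℕ) < n - 2) → (NF n d hn hd α : MvPolynomial (Fin n) k) = 0)) α ?_
  intro α ih i hiS
  have h : (S n d α).Nonempty := ⟨i, hiS⟩
  have hi0S := (S n d α).min'_mem h
  have hmin : (S n d α).min' h ≤ i := (S n d α).min'_le i hiS
  have hiSp := (mem_S n d).mp hiS
  have hi0Sp := (mem_S n d).mp hi0S
  by_cases heq : (S n d α).min' h = i
  · -- i is the minimum: the claims are the defining equations
    subst heq
    constructor
    · intro hv
      conv_rhs => rw [NF]
      rw [dif_pos h, dif_pos hv]
    · intro hv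
      rw [NF, dif_pos h, dif_neg hv]
  · -- i is not the minimum
    have hlt : (S n d α).min' h < i := lt_of_le_of_ne hmin heq
    have hlt' : ((S n d α).min' h : ℕ) < (i : ℕ) := hlt
    have hv0 : (((S n d α).min' h : Fin n) : ℕ) < n - 2 := by omega
    have hkey : (NF n d hn hd α : MvPolynomial (Fin n) k)
        = NF n d hn hd (stepv n d (((S n d α).min' h : Fin n) : ℕ) hn hv0 α) := by
      conv_lhs => rw [NF]
      rw [dif_pos h, dif_pos hv0]
    have hmemstep : i ∈ S n d (stepv n d (((S n d α).min' h : Fin n) : ℕ) hn hv0 α) :=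
      mem_S_stepv d hn hiS _ hv0 (by omega)
    have hsteplt := step_lt n d _ hn hv0 α hi0Sp.2 (hd _ hi0Sp.1)
    constructor
    · intro hv
      have ih1 := (ih _ hsteplt i hmemstep).1 hv
      have hmem2 : ((S n d α).min' h : Fin n) ∈ S n d (stepv n d (i : ℕ) hn hv α) :=
        mem_S_stepv d hn hi0S _ hv (by omega)
      have hsteplt2 := step_lt n d (i : ℕ) hn hv α hiSp.2 (hd _ hiSp.1)
      have ih2 := (ih _ hsteplt2 ((S n d α).min' h) hmem2).1 hv0
      have hcomm := stepv_comm d hn (i : ℕ) (((S n d α).min' h : Fin n) : ℕ) hv hv0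
        (by omega) α hiSp.2 hi0Sp.2
      rw [hkey, ← ih1, hcomm, ih2]
    · intro hv
      have ih2 := (ih _ hsteplt i hmemstep).2 hv
      rw [hkey]
      exact ih2

lemma NF_rewrite (hn : 3 ≤ n) (hd : ∀ i, i < n - 1 → 1 ≤ d i) {α : Fin n →₀ ℕ}
    (i : ℕ) (hi : i < n - 2) (hα : d i ≤ α ⟨i, lt_of_lt_of_le hi (Nat.sub_le n 2)⟩) :
    (NF n d hn hd (stepv n d i hn hi α) : MvPolynomial (Fin n) k) = NF n d hn hd α := by
  have hmem : (⟨i, by omega⟩ : Fin n) ∈ S n d α :=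
    (mem_S n d).mpr ⟨show i < n - 1 by omega, hα⟩
  exact ((NF_inv d hn hd α) _ hmem).1 hi

lemma NF_kill (hn : 3 ≤ n) (hd : ∀ i, i < n - 1 → 1 ≤ d i) {α : Fin n →₀ ℕ}
    (hα : d (n - 2) ≤ α ⟨n - 2, Nat.sub_lt (by omega) two_pos⟩) :
    (NF n d hn hd α : MvPolynomial (Fin n) k) = 0 := by
  have hmem : (⟨n - 2, by omega⟩ : Fin n) ∈ S n d α :=
    (mem_S n d).mpr ⟨show n - 2 < n - 1 by omega, hα⟩
  exact ((NF_inv d hn hd α) _ hmem).2 (show ¬ (n - 2 < n - 2) by omega)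

noncomputable def phi (hn : 3 ≤ n) (hd : ∀ i, i < n - 1 → 1 ≤ d i)
    (f : MvPolynomial (Fin n) k) : MvPolynomial (Fin n) k :=
  Finsupp.sum (AddMonoidAlgebra.coeff f) fun α c => c • NF n d hn hd α

lemma phi_monomial (hn : 3 ≤ n) (hd : ∀ i, i < n - 1 → 1 ≤ d i) (α : Fin n →₀ ℕ) (c : k) :
    phi d hn hd (monomial α c) = c • NF n d hn hd α := by
  unfold phi
  rw [← MvPolynomial.single_eq_monomial, AddMonoidAlgebra.coeff_single, Finsupp.sum_single_index (by simp)]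

lemma phi_add (hn : 3 ≤ n) (hd : ∀ i, i < n - 1 → 1 ≤ d i) (f g : MvPolynomial (Fin n) k) :
    phi d hn hd (f + g) = phi d hn hd f + phi d hn hd g := by
  unfold phi; rw [AddMonoidAlgebra.coeff_add]; exact Finsupp.sum_add_index' (fun _ => zero_smul _ _) (fun _ b₁ b₂ => add_smul b₁ b₂ _)

lemma phi_smul (hn : 3 ≤ n) (hd : ∀ i, i < n - 1 → 1 ≤ d i) (c : k) (f : MvPolynomial (Fin n) k) :
    phi d hn hd (c • f) = c • phi d hn hd f := by
  induction f using MvPolynomial.induction_on' with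
  | monomial γ b =>
    rw [MvPolynomial.smul_monomial, phi_monomial, phi_monomial, smul_smul]
    rfl
  | add p q hp hq =>
    rw [smul_add, phi_add, hp, hq, phi_add, smul_add]

lemma phi_sub (hn : 3 ≤ n) (hd : ∀ i, i < n - 1 → 1 ≤ d i) (f g : MvPolynomial (Fin n) k) :
    phi d hn hd (f - g) = phi d hn hd f - phi d hn hd g := by
  have := phi_add d hn hd g (f - g)
  rw [add_sub_cancel] at this
  rw [this]
  ring

lemma phi_mul_gen1 (hn : 3 ≤ n) (hd : ∀ i, i < n - 1 → 1 ≤ d i) (p : MvPolynomial (Fin n) k)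
    (i : ℕ) (hi : i < n - 2) :
    phi d hn hd (p * ((X (⟨i, by have := hd; omega⟩ : Fin n)) ^ d i -
      X (⟨i + 1, by have := hd; omega⟩ : Fin n) * X (⟨n - 1, by have := hd; omega⟩ : Fin n) ^ (d i - 1))) = 0 := by
  have hgen : ((X (⟨i, by omega⟩ : Fin n)) ^ d i -
      X (⟨i + 1, by omega⟩ : Fin n) * X (⟨n - 1, by omega⟩ : Fin n) ^ (d i - 1)
        : MvPolynomial (Fin n) k)
      = monomial (Finsupp.single (⟨i, by omega⟩ : Fin n) (d i)) 1
        - monomial (Finsupp.single (⟨i + 1, by omega⟩ : Fin n) 1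
            + Finsupp.single (⟨n - 1, by omega⟩ : Fin n) (d i - 1)) 1 := by
    rw [X_pow_eq_monomial, ← pow_one (X (⟨i + 1, by omega⟩ : Fin n)), X_pow_eq_monomial,
      X_pow_eq_monomial, monomial_mul, one_mul]
  rw [hgen]
  induction p using MvPolynomial.induction_on' with
  | monomial γ c =>
    rw [mul_sub, monomial_mul, monomial_mul, phi_sub, phi_monomial, phi_monomial]
    have hstep : γ + (Finsupp.single (⟨i + 1, by omega⟩ : Fin n) 1
          + Finsupp.single (⟨n - 1, by omega⟩ : Fin n) (d i - 1))
        = stepv n d i hn hi (γ + Finsupp.single (⟨i, by omega⟩ : Fin n) (d i)) := by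
      rw [stepv, add_tsub_cancel_right, add_assoc]
    rw [hstep, NF_rewrite d hn hd i hi (by
      rw [Finsupp.add_apply]
      simp)]
    simp
  | add p q hp hq =>
    rw [add_mul, phi_add, hp, hq, add_zero]

lemma phi_mul_gen2 (hn : 3 ≤ n) (hd : ∀ i, i < n - 1 → 1 ≤ d i) (p : MvPolynomial (Fin n) k) :
    phi d hn hd (p * (X (⟨n - 2, by have := hd; omega⟩ : Fin n)) ^ d (n - 2)) = 0 := by
  rw [X_pow_eq_monomial]
  induction p using MvPolynomial.induction_on' with
  | monomial γ c =>
    rw [monomial_mul, phi_monomial, NF_kill d hn hd (by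
      rw [Finsupp.add_apply]
      simp), smul_zero]
  | add p q hp hq =>
    rw [add_mul, phi_add, hp, hq, add_zero]

lemma neZero_of_lead {f : MvPolynomial (Fin n) k} {e : Fin n →₀ ℕ} (h : IsLeadExp f e) :
    f ≠ 0 := fun h0 => by
  rw [h0] at h
  simpa using h.1

lemma lead_unique {f : MvPolynomial (Fin n) k} {e e' : Fin n →₀ ℕ}
    (h : IsLeadExp f e) (h' : IsLeadExp f e') : e = e' := by
  by_contra hne
  exact asymm' (h.2 e' h'.1 (fun hh => hne hh.symm)) (h'.2 e h.1 hne)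

lemma isLead_gen2 (hn : 3 ≤ n) (hd : ∀ i, i < n - 1 → 1 ≤ d i) :
    IsLeadExp ((X (⟨n - 2, by have := hd; omega⟩ : Fin n)) ^ d (n - 2) : MvPolynomial (Fin n) k)
      (Finsupp.single (⟨n - 2, by have := hd; omega⟩ : Fin n) (d (n - 2))) := by
  constructor
  · rw [X_pow_eq_monomial]
    simp [MvPolynomial.support_monomial]
  · intro e' he' hne
    rw [X_pow_eq_monomial] at he'
    simp [MvPolynomial.support_monomial] at he'
    exact absurd he'.symm hne

lemma lt_gen1 (hn : 3 ≤ n) (hd : ∀ i, i < n - 1 → 1 ≤ d i) (i : ℕ) (hi : i < n - 2) :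
    DegRevLexLT
      (Finsupp.single (⟨i + 1, by have := hd; omega⟩ : Fin n) 1
        + Finsupp.single (⟨n - 1, by have := hd; omega⟩ : Fin n) (d i - 1))
      (Finsupp.single (⟨i, by have := hd; omega⟩ : Fin n) (d i)) := by
  have hd1 : 1 ≤ d i := hd i (by omega)
  right
  constructor
  · show deg _ = deg _
    rw [deg_add, deg_single, deg_single, deg_single]
    omega
  · rcases Nat.lt_or_ge (d i) 2 with h2 | h2
    · refine ⟨⟨i + 1, by omega⟩, ?_, ?_⟩
      · simp only [Finsupp.add_apply, Finsupp.single_apply, Fin.ext_iff, Fin.val_mk]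
        split_ifs <;> omega
      · intro j hj
        have hj' : i + 1 < (j : ℕ) := hj
        simp only [Finsupp.add_apply, Finsupp.single_apply, Fin.ext_iff, Fin.val_mk]
        split_ifs <;> omega
    · refine ⟨⟨n - 1, by omega⟩, ?_, ?_⟩
      · simp only [Finsupp.add_apply, Finsupp.single_apply, Fin.ext_iff, Fin.val_mk]
        split_ifs <;> omega
      · intro j hj
        have hj' : n - 1 < (j : ℕ) := hj
        have := j.isLt
        exact absurd hj' (by omega)

lemma isLead_gen1 (hn : 3 ≤ n) (hd : ∀ i, i < n - 1 → 1 ≤ d i) (i : ℕ) (hi : i < n - 2) :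
    IsLeadExp ((X (⟨i, by have := hd; omega⟩ : Fin n)) ^ d i -
        X (⟨i + 1, by have := hd; omega⟩ : Fin n) * X (⟨n - 1, by have := hd; omega⟩ : Fin n) ^ (d i - 1)
        : MvPolynomial (Fin n) k)
      (Finsupp.single (⟨i, by have := hd; omega⟩ : Fin n) (d i)) := by
  have hd1 : 1 ≤ d i := hd i (by omega)
  set u : Fin n →₀ ℕ := Finsupp.single (⟨i, by omega⟩ : Fin n) (d i) with hu
  set v : Fin n →₀ ℕ := Finsupp.single (⟨i + 1, by omega⟩ : Fin n) 1
    + Finsupp.single (⟨n - 1, by omega⟩ : Fin n) (d i - 1) with hv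
  have hgen : ((X (⟨i, by omega⟩ : Fin n)) ^ d i -
      X (⟨i + 1, by omega⟩ : Fin n) * X (⟨n - 1, by omega⟩ : Fin n) ^ (d i - 1)
        : MvPolynomial (Fin n) k) = monomial u 1 - monomial v 1 := by
    rw [X_pow_eq_monomial, ← pow_one (X (⟨i + 1, by omega⟩ : Fin n)), X_pow_eq_monomial,
      X_pow_eq_monomial, monomial_mul, one_mul, hu, hv]
  have huv : u ≠ v := by
    intro hEq
    have h2 := congrArg (fun w : Fin n →₀ ℕ => w (⟨i, by omega⟩ : Fin n)) hEq
    simp only [hu, hv, Finsupp.add_apply, Finsupp.single_apply, Fin.ext_iff, Fin.val_mk] at h2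
    split_ifs at h2 <;> omega
  rw [hgen]
  constructor
  · rw [MvPolynomial.mem_support_iff, MvPolynomial.coeff_sub, MvPolynomial.coeff_monomial,
      MvPolynomial.coeff_monomial, if_pos rfl, if_neg (fun hh => huv hh.symm)]
    simp
  · intro e' he' hne
    have hev : e' = v := by
      by_contra hvv
      apply MvPolynomial.mem_support_iff.mp he'
      rw [MvPolynomial.coeff_sub, MvPolynomial.coeff_monomial, MvPolynomial.coeff_monomial,
        if_neg (fun hh => hne hh.symm), if_neg (fun hh => hvv hh.symm)]
      simp
    rw [hev]
    exact lt_gen1 d hn hd i hi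

lemma phi_span_zero (hn : 3 ≤ n) (hd : ∀ i, i < n - 1 → 1 ≤ d i)
    {f : MvPolynomial (Fin n) k}
    (hf : f ∈ Ideal.span
      ({f : MvPolynomial (Fin n) k | ∃ i : ℕ, ∃ hi : i < n - 2,
          f = (X (⟨i, by have := hd; omega⟩ : Fin n)) ^ d i -
            X (⟨i + 1, by have := hd; omega⟩ : Fin n) * X (⟨n - 1, by have := hd; omega⟩ : Fin n) ^ (d i - 1)} ∪
        {X (⟨n - 2, by have := hd; omega⟩ : Fin n) ^ d (n - 2)})) :
    phi d hn hd f = 0 := by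
  set A : Set (MvPolynomial (Fin n) k) :=
    ({f : MvPolynomial (Fin n) k | ∃ i : ℕ, ∃ hi : i < n - 2,
        f = (X (⟨i, by omega⟩ : Fin n)) ^ d i -
          X (⟨i + 1, by omega⟩ : Fin n) * X (⟨n - 1, by omega⟩ : Fin n) ^ (d i - 1)} ∪
      {X (⟨n - 2, by omega⟩ : Fin n) ^ d (n - 2)}) with hA
  set T : Submodule k (MvPolynomial (Fin n) k) :=
    Submodule.span k {x | ∃ p, ∃ a ∈ A, x = p * a} with hT
  have hmulT : ∀ r : MvPolynomial (Fin n) k, ∀ x ∈ T, r * x ∈ T := by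
    intro r x hx
    refine Submodule.span_induction (p := fun x _ => r * x ∈ T) ?_ ?_ ?_ ?_ hx
    · rintro x ⟨p, a, ha, rfl⟩
      exact Submodule.subset_span ⟨r * p, a, ha, (mul_assoc r p a).symm⟩
    · show r * 0 ∈ T
      rw [mul_zero]; exact T.zero_mem
    · intro x y _ _ h1 h2
      show r * (x + y) ∈ T
      rw [mul_add]; exact T.add_mem h1 h2
    · intro c x _ h1
      show r * (c • x) ∈ T
      rw [mul_smul_comm]; exact T.smul_mem c h1
  have hfT : f ∈ T := by
    refine Submodule.span_induction (p := fun x _ => x ∈ T) ?_ ?_ ?_ ?_ hf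
    · intro a ha
      exact Submodule.subset_span ⟨1, a, ha, (one_mul a).symm⟩
    · exact T.zero_mem
    · intro x y _ _ h1 h2; exact T.add_mem h1 h2
    · intro r x _ h1
      show r • x ∈ T
      rw [smul_eq_mul]
      exact hmulT r x h1
  refine Submodule.span_induction (p := fun x _ => phi d hn hd x = 0) ?_ ?_ ?_ ?_ hfT
  · rintro x ⟨p, a, ha, rfl⟩
    rcases ha with ⟨i, hi, rfl⟩ | ha
    · exact phi_mul_gen1 d hn hd p i hi
    · rw [Set.mem_singleton_iff] at ha
      rw [ha]
      exact phi_mul_gen2 d hn hd p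
  · show phi d hn hd 0 = 0
    unfold phi
    rw [AddMonoidAlgebra.coeff_zero]
    exact Finsupp.sum_zero_index
  · intro x y _ _ h1 h2
    show phi d hn hd (x + y) = 0
    rw [phi_add, h1, h2, add_zero]
  · intro c x _ h1
    show phi d hn hd (c • x) = 0
    rw [phi_smul, h1, smul_zero]

lemma lead_not_std (hn : 3 ≤ n) (hd : ∀ i, i < n - 1 → 1 ≤ d i)
    {f : MvPolynomial (Fin n) k}
    (hf : f ∈ Ideal.span
      ({f : MvPolynomial (Fin n) k | ∃ i : ℕ, ∃ hi : i < n - 2,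
          f = (X (⟨i, by have := hd; omega⟩ : Fin n)) ^ d i -
            X (⟨i + 1, by have := hd; omega⟩ : Fin n) * X (⟨n - 1, by have := hd; omega⟩ : Fin n) ^ (d i - 1)} ∪
        {X (⟨n - 2, by have := hd; omega⟩ : Fin n) ^ d (n - 2)}))
    {e : Fin n →₀ ℕ} (he : IsLeadExp f e) :
    ∃ i : ℕ, ∃ hi : i < n - 1, d i ≤ e ⟨i, lt_of_lt_of_le hi (Nat.sub_le n 1)⟩ := by
  by_contra hc
  push_neg at hc
  have hSe : ¬ (S n d e).Nonempty := by
    rintro ⟨j, hj⟩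
    rw [mem_S] at hj
    have h2 : e ⟨(j : ℕ), by omega⟩ < d (j : ℕ) := hc (j : ℕ) hj.1
    exact absurd hj.2 (not_le.mpr h2)
  have hphi := phi_span_zero d hn hd hf
  have hcoeff : MvPolynomial.coeff e (phi d hn hd f) = MvPolynomial.coeff e f := by
    unfold phi
    rw [Finsupp.sum, MvPolynomial.coeff_sum]
    refine (Finset.sum_eq_single_of_mem e he.1 ?_).trans ?_
    · intro α hα hne
      rw [MvPolynomial.coeff_smul]
      have hord := he.2 α hα hne
      have hz : MvPolynomial.coeff e (NF n d hn hd α : MvPolynomial (Fin n) k) = 0 := by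
        by_contra hne0
        have hmem : e ∈ (NF n d hn hd α : MvPolynomial (Fin n) k).support :=
          MvPolynomial.mem_support_iff.mpr hne0
        rcases NF_support d hn hd α e hmem with heq | hlt
        · exact hne heq.symm
        · exact asymm' hord hlt
      rw [hz, smul_zero]
    · rw [MvPolynomial.coeff_smul, NF_of_empty d hn hd hSe, MvPolynomial.coeff_monomial,
        if_pos rfl, smul_eq_mul, mul_one]
      rfl
  rw [hphi] at hcoeff
  exact (MvPolynomial.mem_support_iff.mp he.1) hcoeff.symm

lemma mono_mem (hn : 3 ≤ n) (hd : ∀ i, i < n - 1 → 1 ≤ d i) (e : Fin n →₀ ℕ)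
    (i : ℕ) (hi : i < n - 1) (hde : d i ≤ e ⟨i, lt_of_lt_of_le hi (Nat.sub_le n 1)⟩) :
    (monomial e (1 : k)) ∈
      Ideal.span {g : MvPolynomial (Fin n) k | ∃ i : ℕ, ∃ hi : i < n - 1,
        g = (X (⟨i, by omega⟩ : Fin n)) ^ d i} := by
  have hle : Finsupp.single (⟨i, by omega⟩ : Fin n) (d i) ≤ e :=
    Finsupp.single_le_iff.mpr hde
  have heq : monomial e (1 : k)
      = monomial (e - Finsupp.single (⟨i, by omega⟩ : Fin n) (d i)) 1
        * (X (⟨i, by omega⟩ : Fin n)) ^ d i := by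
    rw [X_pow_eq_monomial, monomial_mul, one_mul, tsub_add_cancel_of_le hle]
  rw [heq]
  exact Ideal.mul_mem_left _ _ (Ideal.subset_span ⟨i, hi, rfl⟩)

end MLG

/-- Let `I` be the ideal generated by
`A = {x_1^{d_1} - x_2 x_n^{d_1-1}, …, x_{n-2}^{d_{n-2}} - x_{n-1} x_n^{d_{n-2}-1}, x_{n-1}^{d_{n-1}}}`.
Then `A` is a Gröbner basis of `I` w.r.t. degrevlex with `x_n` smallest, and the leading
ideal of `I` is `⟨x_1^{d_1}, …, x_{n-1}^{d_{n-1}}⟩`.  (Variables are indexed `0, …, n-1`,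
so `x_i` is `X (i-1)` and `d_i` is `d (i-1)`.) -/
theorem mora_lazard_groebner {k : Type*} [Field k] (n : ℕ) (hn : 3 ≤ n)
    (d : ℕ → ℕ) (hd : ∀ i, i < n - 1 → 1 ≤ d i) :
    IsGroebnerBasis
      ({f : MvPolynomial (Fin n) k | ∃ i : ℕ, ∃ hi : i < n - 2,
          f = (X (⟨i, by omega⟩ : Fin n)) ^ d i -
            X (⟨i + 1, by omega⟩ : Fin n) * X (⟨n - 1, by omega⟩ : Fin n) ^ (d i - 1)} ∪
        {X (⟨n - 2, by omega⟩ : Fin n) ^ d (n - 2)})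
      (Ideal.span
        ({f : MvPolynomial (Fin n) k | ∃ i : ℕ, ∃ hi : i < n - 2,
            f = (X (⟨i, by omega⟩ : Fin n)) ^ d i -
              X (⟨i + 1, by omega⟩ : Fin n) * X (⟨n - 1, by omega⟩ : Fin n) ^ (d i - 1)} ∪
          {X (⟨n - 2, by omega⟩ : Fin n) ^ d (n - 2)})) ∧
    ltIdeal
        (Ideal.span
          ({f : MvPolynomial (Fin n) k | ∃ i : ℕ, ∃ hi : i < n - 2,
              f = (X (⟨i, by omega⟩ : Fin n)) ^ d i -
                X (⟨i + 1, by omega⟩ : Fin n) * X (⟨n - 1, by omega⟩ : Fin n) ^ (d i - 1)} ∪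
            {X (⟨n - 2, by omega⟩ : Fin n) ^ d (n - 2)})) =
      Ideal.span {g : MvPolynomial (Fin n) k | ∃ i : ℕ, ∃ hi : i < n - 1, g = (X (⟨i, by omega⟩ : Fin n)) ^ d i} := by
  set A : Set (MvPolynomial (Fin n) k) :=
    ({f : MvPolynomial (Fin n) k | ∃ i : ℕ, ∃ hi : i < n - 2,
        f = (X (⟨i, by omega⟩ : Fin n)) ^ d i -
          X (⟨i + 1, by omega⟩ : Fin n) * X (⟨n - 1, by omega⟩ : Fin n) ^ (d i - 1)} ∪
      {X (⟨n - 2, by omega⟩ : Fin n) ^ d (n - 2)}) with hA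
  set P : Set (MvPolynomial (Fin n) k) :=
    {g : MvPolynomial (Fin n) k | ∃ i : ℕ, ∃ hi : i < n - 1,
      g = (X (⟨i, by omega⟩ : Fin n)) ^ d i} with hP
  have hlt : ltIdeal (Ideal.span A) = Ideal.span P := by
    apply le_antisymm
    · rw [ltIdeal]
      apply Ideal.span_le.mpr
      rintro m ⟨f, hfI, hf0, e, he, rfl⟩
      obtain ⟨i, hi, hde⟩ := MLG.lead_not_std d hn hd hfI he
      exact MLG.mono_mem d hn hd e i hi hde
    · apply Ideal.span_le.mpr
      rintro g ⟨i, hi, rfl⟩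
      rcases Nat.lt_or_ge i (n - 2) with h2 | h2
      · refine Ideal.subset_span ⟨_, Ideal.subset_span (Or.inl ⟨i, h2, rfl⟩),
          MLG.neZero_of_lead (MLG.isLead_gen1 d hn hd i h2), _,
          MLG.isLead_gen1 d hn hd i h2, ?_⟩
        rw [X_pow_eq_monomial]
      · have hieq : i = n - 2 := by omega
        subst hieq
        refine Ideal.subset_span ⟨_, Ideal.subset_span (Or.inr rfl),
          MLG.neZero_of_lead (MLG.isLead_gen2 d hn hd), _, MLG.isLead_gen2 d hn hd, ?_⟩
        rw [X_pow_eq_monomial]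
  have hset : P = {m : MvPolynomial (Fin n) k |
      ∃ f ∈ A, ∃ e, IsLeadExp f e ∧ m = monomial e (1 : k)} := by
    ext g
    constructor
    · rintro ⟨i, hi, rfl⟩
      rcases Nat.lt_or_ge i (n - 2) with h2 | h2
      · exact ⟨_, Or.inl ⟨i, h2, rfl⟩, _, MLG.isLead_gen1 d hn hd i h2,
          by rw [X_pow_eq_monomial]⟩
      · have hieq : i = n - 2 := by omega
        subst hieq
        exact ⟨_, Or.inr rfl, _, MLG.isLead_gen2 d hn hd, by rw [X_pow_eq_monomial]⟩
    · rintro ⟨f, hfA, e, he, rfl⟩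
      rcases hfA with ⟨i, hi, rfl⟩ | hfA
      · have heq := MLG.lead_unique he (MLG.isLead_gen1 d hn hd i hi)
        subst heq
        exact ⟨i, by omega, by rw [X_pow_eq_monomial]⟩
      · rw [Set.mem_singleton_iff] at hfA
        subst hfA
        have heq := MLG.lead_unique he (MLG.isLead_gen2 d hn hd)
        subst heq
        exact ⟨n - 2, by omega, by rw [X_pow_eq_monomial]⟩
  refine ⟨?_, hlt⟩
  unfold IsGroebnerBasis
  exact ⟨fun a ha => Ideal.subset_span ha, by rw [hlt, hset]⟩
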